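/- Let Γ be a non-elementary hyperbolic group with metric d ∈ D(Γ), μ_PS its Patterson-Sullivan measure, π the boundary representation on H = L²(∂Γ, μ_PS), Ξ(g) = ⟨π(g)1, 1⟩ the Harish-Chandra function, and (μ_R) probability measures supported in A_{R,h} with μ_R({g}) ≤ Cω^{-R}. Assume (a) Ξ(g) ≥ c·ω^{-|g|/2}(1+|g|) and (b) the annular RD estimate Σ_{g∈A_{R,h}} |⟨π(g)v,w⟩|² ≤ C'(1+R)²‖v‖²‖w‖². Then the forms Φ_R(v₁,v₂,w₁,w₂) = Σ_g μ_R(g) f₁(g) f₂(g^{-1}) ⟨π(g)v₁,w₁⟩·conj(⟨π(g)v₂,w₂⟩)/Ξ(g)² are uniformly bounded: |Φ_R| ≤ M‖f₁‖_∞‖f₂‖_∞‖v₁‖‖v₂‖‖w₁‖‖w₂‖ for a constant M independent of R. -/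

import Mathlib

/-- Uniform boundedness of the quadrilinear forms `Φ_R` (Lemma 3.4): under the
Harish-Chandra lower bound and the annular RD estimate for matrix coefficients,
the weighted sums of products of two matrix coefficients are bounded uniformly
in `R`. -/
theorem uniform_boundedness_forms {Γ : Type*} [Group Γ]
    {H : Type*} [NormedAddCommGroup H] [InnerProductSpace ℂ H]
    (ℓ : Γ → ℝ) (hℓ0 : ∀ g, 0 ≤ ℓ g)
    (ω : ℝ) (hω : 1 < ω) (h : ℝ) (hh : 0 ≤ h)
    (A : ℝ → Finset Γ) (hA : ∀ R g, g ∈ A R ↔ ℓ g ∈ Set.Icc (R - h) (R + h))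
    (π : Γ →* (H ≃ₗᵢ[ℂ] H))
    (Ξ : Γ → ℝ) (hΞpos : ∀ g, 0 < Ξ g)
    (c : ℝ) (hc : 0 < c)
    (ha : ∀ g, c * ω ^ (-(ℓ g) / 2) * (1 + ℓ g) ≤ Ξ g)
    (C' : ℝ)
    (hb : ∀ (v w : H) (R : ℝ),
      ∑ g ∈ A R, ‖(inner ℂ (π g v) w : ℂ)‖ ^ 2 ≤ C' * (1 + R) ^ 2 * ‖v‖ ^ 2 * ‖w‖ ^ 2)
    (μ : ℝ → Γ → ℝ) (Cμ : ℝ)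
    (hμ0 : ∀ R g, 0 ≤ μ R g) (hμb : ∀ R g, μ R g ≤ Cμ * ω ^ (-R)) :
    ∃ M : ℝ, ∀ R : ℝ, 0 ≤ R → ∀ (f₁ f₂ : Γ → ℂ) (B₁ B₂ : ℝ),
      (∀ g, ‖f₁ g‖ ≤ B₁) → (∀ g, ‖f₂ g‖ ≤ B₂) →
      ∀ v₁ v₂ w₁ w₂ : H,
        ‖∑ g ∈ A R, ((μ R g / (Ξ g) ^ 2 : ℝ) : ℂ) * (f₁ g * f₂ g⁻¹ *
            (inner ℂ (π g v₁) w₁ : ℂ) * (starRingEnd ℂ) (inner ℂ (π g v₂) w₂))‖ ≤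
          M * B₁ * B₂ * ‖v₁‖ * ‖v₂‖ * ‖w₁‖ * ‖w₂‖ := by
  classical
  have hωpos : (0:ℝ) < ω := lt_trans one_pos hω
  have hCμ : 0 ≤ Cμ := by
    have h1 := (hμ0 0 1).trans (hμb 0 1)
    simpa using h1
  set C'' : ℝ := max C' 0 with hC''def
  have hC''nn : 0 ≤ C'' := le_max_right _ _
  set K : ℝ := Cμ * ω ^ h * (1+h)^2 / c^2 with hKdef
  have hKnn : 0 ≤ K := by
    apply div_nonneg _ (sq_nonneg c)
    exact mul_nonneg (mul_nonneg hCμ (Real.rpow_pos_of_pos hωpos h).le) (sq_nonneg _)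
  refine ⟨K * C'', ?_⟩
  intro R hR f₁ f₂ B₁ B₂ hf₁ hf₂ v₁ v₂ w₁ w₂
  have hRpos : (0:ℝ) < 1 + R := by linarith
  have hB₁ : 0 ≤ B₁ := le_trans (norm_nonneg _) (hf₁ 1)
  have hB₂ : 0 ≤ B₂ := le_trans (norm_nonneg _) (hf₂ 1)
  set a : Γ → ℝ := fun g => ‖(inner ℂ (π g v₁) w₁ : ℂ)‖ with hadef
  set b : Γ → ℝ := fun g => ‖(inner ℂ (π g v₂) w₂ : ℂ)‖ with hbdef
  have hann : ∀ g, 0 ≤ a g := fun g => norm_nonneg _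
  have hbnn : ∀ g, 0 ≤ b g := fun g => norm_nonneg _
  -- pointwise coefficient bound
  have key : ∀ g ∈ A R, μ R g / (Ξ g)^2 ≤ K / (1+R)^2 := by
    intro g hg
    obtain ⟨hg1, hg2⟩ := (hA R g).1 hg
    have hℓ := hℓ0 g
    have hΞ := ha g
    have hx : (0:ℝ) < ω ^ (-(ℓ g)/2) := Real.rpow_pos_of_pos hωpos _
    have hΞsq : c^2 * ω ^ (-(ℓ g)) * (1 + ℓ g)^2 ≤ (Ξ g)^2 := by
      have h2 : (c * ω ^ (-(ℓ g)/2) * (1 + ℓ g))^2 ≤ (Ξ g)^2 := by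
        apply pow_le_pow_left₀ _ hΞ
        positivity
      have h3 : ω ^ (-(ℓ g)) = ω ^ (-(ℓ g)/2) * ω ^ (-(ℓ g)/2) := by
        rw [← Real.rpow_add hωpos]; ring_nf
      calc c^2 * ω ^ (-(ℓ g)) * (1 + ℓ g)^2
          = (c * ω ^ (-(ℓ g)/2) * (1 + ℓ g))^2 := by rw [h3]; ring
        _ ≤ (Ξ g)^2 := h2
    have h4 : ω ^ (-(R+h)) ≤ ω ^ (-(ℓ g)) :=
      (Real.rpow_le_rpow_left_iff hω).2 (by linarith)
    have h5 : (1+R)^2 ≤ (1+h)^2 * (1 + ℓ g)^2 := by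
      have h5' : 1 + R ≤ (1+h) * (1 + ℓ g) := by nlinarith
      have h5'' := mul_le_mul h5' h5' (by linarith) (by positivity)
      nlinarith [h5'']
    rw [div_le_div_iff₀ (pow_pos (hΞpos g) 2) (by positivity)]
    have h6 : μ R g * (1+R)^2 ≤ Cμ * ω ^ (-R) * (1+R)^2 :=
      mul_le_mul_of_nonneg_right (hμb R g) (by positivity)
    have h8 : ω ^ (-R : ℝ) = ω ^ h * ω ^ (-(R+h)) := by
      rw [← Real.rpow_add hωpos]; ring_nf
    have h9 : ω ^ (-(R+h)) * (1+R)^2 ≤ ω ^ (-(ℓ g)) * ((1+h)^2 * (1 + ℓ g)^2) :=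
      mul_le_mul h4 h5 (by positivity) (by positivity)
    have h10 : Cμ * ω ^ (-R) * (1+R)^2
        ≤ K * (c^2 * ω ^ (-(ℓ g)) * (1 + ℓ g)^2) := by
      have hQ : 0 ≤ Cμ * ω ^ h := mul_nonneg hCμ (Real.rpow_pos_of_pos hωpos h).le
      have := mul_le_mul_of_nonneg_left h9 hQ
      calc Cμ * ω ^ (-R) * (1+R)^2
          = Cμ * ω ^ h * (ω ^ (-(R+h)) * (1+R)^2) := by rw [h8]; ring
        _ ≤ Cμ * ω ^ h * (ω ^ (-(ℓ g)) * ((1+h)^2 * (1 + ℓ g)^2)) := this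
        _ = K * (c^2 * ω ^ (-(ℓ g)) * (1 + ℓ g)^2) := by
            rw [hKdef]; field_simp
    calc μ R g * (1+R)^2 ≤ Cμ * ω ^ (-R) * (1+R)^2 := h6
      _ ≤ K * (c^2 * ω ^ (-(ℓ g)) * (1 + ℓ g)^2) := h10
      _ ≤ K * (Ξ g)^2 := mul_le_mul_of_nonneg_left hΞsq hKnn
  -- norm of each term
  have hnorm : ∀ g, ‖((μ R g / (Ξ g) ^ 2 : ℝ) : ℂ) * (f₁ g * f₂ g⁻¹ *
        (inner ℂ (π g v₁) w₁ : ℂ) * (starRingEnd ℂ) (inner ℂ (π g v₂) w₂))‖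
      = (μ R g / (Ξ g)^2) * (‖f₁ g‖ * ‖f₂ g⁻¹‖ * a g * b g) := by
    intro g
    have hnn : 0 ≤ μ R g / (Ξ g)^2 := div_nonneg (hμ0 R g) (sq_nonneg _)
    simp only [norm_mul, Complex.norm_real, RCLike.norm_conj, Real.norm_eq_abs,
      abs_of_nonneg hnn, hadef, hbdef]
    try ring
  -- per-term estimate
  have hterm : ∀ g ∈ A R,
      (μ R g / (Ξ g)^2) * (‖f₁ g‖ * ‖f₂ g⁻¹‖ * a g * b g)
      ≤ (K/(1+R)^2 * (B₁ * B₂)) * (a g * b g) := by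
    intro g hg
    have h1 : ‖f₁ g‖ * ‖f₂ g⁻¹‖ ≤ B₁ * B₂ :=
      mul_le_mul (hf₁ g) (hf₂ g⁻¹) (norm_nonneg _) hB₁
    have h2 : ‖f₁ g‖ * ‖f₂ g⁻¹‖ * a g * b g ≤ (B₁*B₂) * (a g * b g) := by
      have h2' := mul_le_mul_of_nonneg_right h1
        (mul_nonneg (hann g) (hbnn g))
      calc ‖f₁ g‖ * ‖f₂ g⁻¹‖ * a g * b g
          = ‖f₁ g‖ * ‖f₂ g⁻¹‖ * (a g * b g) := by ring
        _ ≤ (B₁*B₂) * (a g * b g) := h2'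
    calc (μ R g / (Ξ g)^2) * (‖f₁ g‖ * ‖f₂ g⁻¹‖ * a g * b g)
        ≤ (K/(1+R)^2) * ((B₁*B₂) * (a g * b g)) :=
          mul_le_mul (key g hg) h2 (by positivity)
            (div_nonneg hKnn (by positivity))
      _ = (K/(1+R)^2 * (B₁*B₂)) * (a g * b g) := by ring
  -- Cauchy–Schwarz
  have hT : ∑ g ∈ A R, a g * b g
      ≤ C'' * (1+R)^2 * (‖v₁‖ * ‖w₁‖ * ‖v₂‖ * ‖w₂‖) := by
    have hcs := Finset.sum_mul_sq_le_sq_mul_sq (A R) a b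
    have hA1 : ∑ g ∈ A R, a g ^ 2 ≤ C'' * (1+R)^2 * ‖v₁‖^2 * ‖w₁‖^2 := by
      refine (hb v₁ w₁ R).trans ?_
      have : C' * ((1+R)^2 * ‖v₁‖^2 * ‖w₁‖^2) ≤ C'' * ((1+R)^2 * ‖v₁‖^2 * ‖w₁‖^2) :=
        mul_le_mul_of_nonneg_right (le_max_left _ _) (by positivity)
      calc C' * (1+R)^2 * ‖v₁‖^2 * ‖w₁‖^2
          = C' * ((1+R)^2 * ‖v₁‖^2 * ‖w₁‖^2) := by ring
        _ ≤ C'' * ((1+R)^2 * ‖v₁‖^2 * ‖w₁‖^2) := this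
        _ = C'' * (1+R)^2 * ‖v₁‖^2 * ‖w₁‖^2 := by ring
    have hA2 : ∑ g ∈ A R, b g ^ 2 ≤ C'' * (1+R)^2 * ‖v₂‖^2 * ‖w₂‖^2 := by
      refine (hb v₂ w₂ R).trans ?_
      have : C' * ((1+R)^2 * ‖v₂‖^2 * ‖w₂‖^2) ≤ C'' * ((1+R)^2 * ‖v₂‖^2 * ‖w₂‖^2) :=
        mul_le_mul_of_nonneg_right (le_max_left _ _) (by positivity)
      calc C' * (1+R)^2 * ‖v₂‖^2 * ‖w₂‖^2
          = C' * ((1+R)^2 * ‖v₂‖^2 * ‖w₂‖^2) := by ring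
        _ ≤ C'' * ((1+R)^2 * ‖v₂‖^2 * ‖w₂‖^2) := this
        _ = C'' * (1+R)^2 * ‖v₂‖^2 * ‖w₂‖^2 := by ring
    have hTnn : 0 ≤ ∑ g ∈ A R, a g * b g :=
      Finset.sum_nonneg fun g _ => mul_nonneg (hann g) (hbnn g)
    have hSnn : 0 ≤ C'' * (1+R)^2 * (‖v₁‖ * ‖w₁‖ * ‖v₂‖ * ‖w₂‖) := by positivity
    have hsq : (∑ g ∈ A R, a g * b g)^2
        ≤ (C'' * (1+R)^2 * (‖v₁‖ * ‖w₁‖ * ‖v₂‖ * ‖w₂‖))^2 := by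
      refine hcs.trans ?_
      calc (∑ g ∈ A R, a g ^ 2) * ∑ g ∈ A R, b g ^ 2
          ≤ (C'' * (1+R)^2 * ‖v₁‖^2 * ‖w₁‖^2) * (C'' * (1+R)^2 * ‖v₂‖^2 * ‖w₂‖^2) :=
            mul_le_mul hA1 hA2 (Finset.sum_nonneg fun g _ => sq_nonneg _) (by positivity)
        _ = (C'' * (1+R)^2 * (‖v₁‖ * ‖w₁‖ * ‖v₂‖ * ‖w₂‖))^2 := by ring
    nlinarith [hsq, hTnn, hSnn]
  -- assemble
  calc ‖∑ g ∈ A R, ((μ R g / (Ξ g) ^ 2 : ℝ) : ℂ) * (f₁ g * f₂ g⁻¹ *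
        (inner ℂ (π g v₁) w₁ : ℂ) * (starRingEnd ℂ) (inner ℂ (π g v₂) w₂))‖
      ≤ ∑ g ∈ A R, ‖((μ R g / (Ξ g) ^ 2 : ℝ) : ℂ) * (f₁ g * f₂ g⁻¹ *
        (inner ℂ (π g v₁) w₁ : ℂ) * (starRingEnd ℂ) (inner ℂ (π g v₂) w₂))‖ :=
        norm_sum_le _ _
    _ = ∑ g ∈ A R, (μ R g / (Ξ g)^2) * (‖f₁ g‖ * ‖f₂ g⁻¹‖ * a g * b g) := by
        exact Finset.sum_congr rfl fun g _ => hnorm g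
    _ ≤ ∑ g ∈ A R, (K/(1+R)^2 * (B₁ * B₂)) * (a g * b g) :=
        Finset.sum_le_sum hterm
    _ = (K/(1+R)^2 * (B₁ * B₂)) * ∑ g ∈ A R, a g * b g := by
        rw [← Finset.mul_sum]
    _ ≤ (K/(1+R)^2 * (B₁ * B₂)) * (C'' * (1+R)^2 * (‖v₁‖ * ‖w₁‖ * ‖v₂‖ * ‖w₂‖)) :=
        mul_le_mul_of_nonneg_left hT
          (mul_nonneg (div_nonneg hKnn (by positivity)) (mul_nonneg hB₁ hB₂))
    _ = K * C'' * B₁ * B₂ * ‖v₁‖ * ‖v₂‖ * ‖w₁‖ * ‖w₂‖ := by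
        field_simp
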